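/- Arrow's impossibility theorem: for a finite set of voters (at least 2) and a finite set of at least 3 alternatives, there is no social welfare function mapping profiles of strict linear orders to a strict linear order that satisfies unanimity and independence of irrelevant alternatives and is non-dictatorial. -/

import Mathlib

set_option linter.unusedSectionVars false
open scoped Classical

namespace ArrowAux

variable {V A : Type}

/-- Strict total order from an injective tie-break `e` and a level function `g`
(lower level = more preferred). -/
def ordOf (e g : A → ℕ) : A → A → Prop :=
  fun p q => g p < g q ∨ (g p = g q ∧ e p < e q)

lemma ordOf_sto {e : A → ℕ} (he : Function.Injective e) (g : A → ℕ) :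
    IsStrictTotalOrder A (ordOf e g) := by
  haveI h1 : IsTrichotomous A (ordOf e g) := by
    constructor
    intro p q
    suffices ordOf e g p q ∨ p = q ∨ ordOf e g q p by intro h1 h2; tauto
    rcases lt_trichotomy (g p) (g q) with h | h | h
    · exact Or.inl (Or.inl h)
    · rcases lt_trichotomy (e p) (e q) with h' | h' | h'
      · exact Or.inl (Or.inr ⟨h, h'⟩)
      · exact Or.inr (Or.inl (he h'))
      · exact Or.inr (Or.inr (Or.inr ⟨h.symm, h'⟩))
    · exact Or.inr (Or.inr (Or.inl h))
  haveI h2 : IsIrrefl A (ordOf e g) := by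
    constructor; intro p h; rcases h with h | ⟨_, h⟩ <;> omega
  haveI h3 : IsTrans A (ordOf e g) := by
    constructor
    intro p q r h h'
    rcases h with h | ⟨h, he2⟩ <;> rcases h' with h' | ⟨h', he'⟩ <;>
      [exact Or.inl (h.trans h'); exact Or.inl (h' ▸ h);
       exact Or.inl (h ▸ h'); exact Or.inr ⟨h.trans h', by omega⟩]
  haveI h4 : IsStrictOrder A (ordOf e g) := ⟨⟩
  exact ⟨⟩

lemma ordOf_ltlv {e g : A → ℕ} {p q : A} (h : g p < g q) : ordOf e g p q := Or.inl h

lemma not_ordOf_gtlv {e g : A → ℕ} {p q : A} (h : g q < g p) : ¬ ordOf e g p q := by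
  rintro (h' | ⟨h', _⟩) <;> omega

/-- level function ranking `x` above `y` above `z` above everything else. -/
noncomputable def lv3 (x y z p : A) : ℕ :=
  if p = x then 0 else if p = y then 1 else if p = z then 2 else 3

lemma lv3_fst (x y z : A) : lv3 x y z x = 0 := by simp [lv3]

lemma lv3_snd {x y : A} (z : A) (h : y ≠ x) : lv3 x y z y = 1 := by simp [lv3, h]

lemma lv3_thd {x y z : A} (h1 : z ≠ x) (h2 : z ≠ y) : lv3 x y z z = 2 := by
  simp [lv3, h1, h2]

section SWF

variable (F : (V → A → A → Prop) → (A → A → Prop))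

def Valid (π : V → A → A → Prop) : Prop := ∀ v, IsStrictTotalOrder A (π v)

def FullDec (U : Finset V) (a b : A) : Prop :=
  ∀ π, Valid π → (∀ v ∈ U, π v a b) → F π a b

def WeakDec (U : Finset V) (a b : A) : Prop :=
  ∀ π, Valid π → (∀ v ∈ U, π v a b) → (∀ v ∉ U, π v b a) → F π a b

def Dec (U : Finset V) : Prop := ∀ a b : A, a ≠ b → FullDec F U a b

lemma FullDec.weak {U : Finset V} {a b : A} (h : FullDec F U a b) : WeakDec F U a b :=
  fun π hπ hU _ => h π hπ hU

end SWF

lemma sto_asymm {r : A → A → Prop} (h : IsStrictTotalOrder A r) {a b : A}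
    (hab : r a b) : ¬ r b a := by
  haveI := h
  exact fun h' => absurd (IsTrans.trans (r := r) a b a hab h') (Std.Irrefl.irrefl a)

lemma sto_trans {r : A → A → Prop} (h : IsStrictTotalOrder A r) {a b c : A}
    (hab : r a b) (hbc : r b c) : r a c := by
  haveI := h; exact IsTrans.trans (r := r) a b c hab hbc

lemma sto_total {r : A → A → Prop} (h : IsStrictTotalOrder A r) {a b : A}
    (hne : a ≠ b) (hnab : ¬ r a b) : r b a := by
  haveI := h
  rcases trichotomous_of r a b with h' | h' | h'
  · exact absurd h' hnab
  · exact absurd h' hne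
  · exact h'



section Main

variable [Fintype V] [Fintype A]

lemma exists_third (hA : 3 ≤ Fintype.card A) (p q : A) : ∃ c, c ≠ p ∧ c ≠ q := by
  by_contra h
  push_neg at h
  have hsub : (Finset.univ : Finset A) ⊆ {p, q} := by
    intro c _
    by_cases hc : c = p
    · simp [hc]
    · simp [h c hc]
  have h1 := Finset.card_le_card hsub
  have h2 : ({p, q} : Finset A).card ≤ 2 :=
    (Finset.card_insert_le _ _).trans (by simp)
  rw [Finset.card_univ] at h1
  omega

lemma exists_three (hA : 3 ≤ Fintype.card A) :
    ∃ a b c : A, a ≠ b ∧ a ≠ c ∧ b ≠ c := by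
  haveI : Nontrivial A := Fintype.one_lt_card_iff_nontrivial.mp (by omega)
  obtain ⟨a, b, hab⟩ := exists_pair_ne A
  obtain ⟨c, hca, hcb⟩ := exists_third hA a b
  exact ⟨a, b, c, hab, Ne.symm hca, Ne.symm hcb⟩

variable {e : A → ℕ} {F : (V → A → A → Prop) → (A → A → Prop)}

lemma expand1 (he : Function.Injective e)
    (hF : ∀ π : V → A → A → Prop, Valid π → IsStrictTotalOrder A (F π))
    (unanimity : ∀ π : V → A → A → Prop, Valid π → ∀ a b : A, (∀ v, π v a b) → F π a b)
    (iia : ∀ π π' : V → A → A → Prop, Valid π → Valid π' →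
      ∀ a b : A, (∀ v, π v a b ↔ π' v a b) → (F π a b ↔ F π' a b))
    {U : Finset V} {x y z : A}
    (hxy : x ≠ y) (hxz : x ≠ z) (hyz : y ≠ z)
    (hW : WeakDec F U x y) : FullDec F U x z := by
  intro π hπ hU
  set π' : V → A → A → Prop := fun v =>
    if v ∈ U then ordOf e (lv3 x y z)
    else if π v x z then ordOf e (lv3 y x z) else ordOf e (lv3 y z x) with hπ'def
  have hπ' : Valid π' := by
    intro v; simp only [hπ'def]; split_ifs <;> exact ordOf_sto he _
  have hxy' : F π' x y := by
    refine hW π' hπ' ?_ ?_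
    · intro v hv
      simp only [hπ'def, if_pos hv]
      exact ordOf_ltlv (by norm_num [lv3, hxy, hxz, hyz, Ne.symm hxy, Ne.symm hxz, Ne.symm hyz])
    · intro v hv
      simp only [hπ'def, if_neg hv]
      split_ifs with h
      · exact ordOf_ltlv (by norm_num [lv3, hxy, hxz, hyz, Ne.symm hxy, Ne.symm hxz, Ne.symm hyz])
      · exact ordOf_ltlv (by norm_num [lv3, hxy, hxz, hyz, Ne.symm hxy, Ne.symm hxz, Ne.symm hyz])
  have hyz' : F π' y z := by
    refine unanimity π' hπ' y z ?_
    intro v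
    simp only [hπ'def]
    split_ifs with h1 h2
    · exact ordOf_ltlv
        (by norm_num [lv3, hxy, hxz, hyz, Ne.symm hxy, Ne.symm hxz, Ne.symm hyz])
    · exact ordOf_ltlv (by norm_num [lv3, hxy, hxz, hyz, Ne.symm hxy, Ne.symm hxz, Ne.symm hyz])
    · exact ordOf_ltlv (by norm_num [lv3, hxy, hxz, hyz, Ne.symm hxy, Ne.symm hxz, Ne.symm hyz])
  have hxz' : F π' x z := sto_trans (hF π' hπ') hxy' hyz'
  refine (iia π π' hπ hπ' x z ?_).mpr hxz'
  intro v
  simp only [hπ'def]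
  split_ifs with h1 h2
  · exact iff_of_true (hU v h1)
      (ordOf_ltlv (by norm_num [lv3, hxy, hxz, hyz, Ne.symm hxy, Ne.symm hxz, Ne.symm hyz]))
  · exact iff_of_true h2
      (ordOf_ltlv (by norm_num [lv3, hxy, hxz, hyz, Ne.symm hxy, Ne.symm hxz, Ne.symm hyz]))
  · exact iff_of_false h2
      (not_ordOf_gtlv (by norm_num [lv3, hxy, hxz, hyz, Ne.symm hxy, Ne.symm hxz, Ne.symm hyz]))

lemma expand2 (he : Function.Injective e)
    (hF : ∀ π : V → A → A → Prop, Valid π → IsStrictTotalOrder A (F π))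
    (unanimity : ∀ π : V → A → A → Prop, Valid π → ∀ a b : A, (∀ v, π v a b) → F π a b)
    (iia : ∀ π π' : V → A → A → Prop, Valid π → Valid π' →
      ∀ a b : A, (∀ v, π v a b ↔ π' v a b) → (F π a b ↔ F π' a b))
    {U : Finset V} {x y z : A}
    (hxy : x ≠ y) (hxz : x ≠ z) (hyz : y ≠ z)
    (hW : WeakDec F U x y) : FullDec F U z y := by
  intro π hπ hU
  set π' : V → A → A → Prop := fun v =>
    if v ∈ U then ordOf e (lv3 z x y)
    else if π v z y then ordOf e (lv3 z y x) else ordOf e (lv3 y z x) with hπ'def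
  have hπ' : Valid π' := by
    intro v; simp only [hπ'def]; split_ifs <;> exact ordOf_sto he _
  have hzx' : F π' z x := by
    refine unanimity π' hπ' z x ?_
    intro v
    simp only [hπ'def]
    split_ifs with h1 h2
    · exact ordOf_ltlv (by norm_num [lv3, hxy, hxz, hyz, Ne.symm hxy, Ne.symm hxz, Ne.symm hyz])
    · exact ordOf_ltlv (by norm_num [lv3, hxy, hxz, hyz, Ne.symm hxy, Ne.symm hxz, Ne.symm hyz])
    · exact ordOf_ltlv (by norm_num [lv3, hxy, hxz, hyz, Ne.symm hxy, Ne.symm hxz, Ne.symm hyz])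
  have hxy' : F π' x y := by
    refine hW π' hπ' ?_ ?_
    · intro v hv
      simp only [hπ'def, if_pos hv]
      exact ordOf_ltlv (by norm_num [lv3, hxy, hxz, hyz, Ne.symm hxy, Ne.symm hxz, Ne.symm hyz])
    · intro v hv
      simp only [hπ'def, if_neg hv]
      split_ifs with h
      · exact ordOf_ltlv (by norm_num [lv3, hxy, hxz, hyz, Ne.symm hxy, Ne.symm hxz, Ne.symm hyz])
      · exact ordOf_ltlv (by norm_num [lv3, hxy, hxz, hyz, Ne.symm hxy, Ne.symm hxz, Ne.symm hyz])
  have hzy' : F π' z y := sto_trans (hF π' hπ') hzx' hxy'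
  refine (iia π π' hπ hπ' z y ?_).mpr hzy'
  intro v
  simp only [hπ'def]
  split_ifs with h1 h2
  · exact iff_of_true (hU v h1)
      (ordOf_ltlv (by norm_num [lv3, hxy, hxz, hyz, Ne.symm hxy, Ne.symm hxz, Ne.symm hyz]))
  · exact iff_of_true h2
      (ordOf_ltlv (by norm_num [lv3, hxy, hxz, hyz, Ne.symm hxy, Ne.symm hxz, Ne.symm hyz]))
  · exact iff_of_false h2
      (not_ordOf_gtlv (by norm_num [lv3, hxy, hxz, hyz, Ne.symm hxy, Ne.symm hxz, Ne.symm hyz]))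

lemma weak_all (he : Function.Injective e) (hA : 3 ≤ Fintype.card A)
    (hF : ∀ π : V → A → A → Prop, Valid π → IsStrictTotalOrder A (F π))
    (unanimity : ∀ π : V → A → A → Prop, Valid π → ∀ a b : A, (∀ v, π v a b) → F π a b)
    (iia : ∀ π π' : V → A → A → Prop, Valid π → Valid π' →
      ∀ a b : A, (∀ v, π v a b ↔ π' v a b) → (F π a b ↔ F π' a b))
    {U : Finset V} {a b : A} (hab : a ≠ b)
    (hW : WeakDec F U a b) : Dec F U := by
  obtain ⟨c, hca, hcb⟩ := exists_third hA a b
  have Dac : FullDec F U a c :=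
    expand1 he hF unanimity iia hab (Ne.symm hca) (Ne.symm hcb) hW
  have Dab : FullDec F U a b :=
    expand1 he hF unanimity iia (Ne.symm hca) hab hcb Dac.weak
  have Day : ∀ y, y ≠ a → FullDec F U a y := by
    intro y hy
    by_cases hyb : y = b
    · subst hyb; exact Dab
    by_cases hyc : y = c
    · subst hyc; exact Dac
    · exact expand1 he hF unanimity iia hab (Ne.symm hy) (fun h => hyb h.symm) hW
  have Dxy : ∀ x y, x ≠ a → y ≠ a → x ≠ y → FullDec F U x y := by
    intro x y hxa hya hxy
    exact expand2 he hF unanimity iia (Ne.symm hya) (Ne.symm hxa) (fun h => hxy h.symm)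
      (Day y hya).weak
  have Dxa : ∀ x, x ≠ a → FullDec F U x a := by
    intro x hxa
    obtain ⟨y, hyx, hya⟩ := exists_third hA x a
    exact expand1 he hF unanimity iia (Ne.symm hyx) hxa hya
      (Dxy x y hxa hya (Ne.symm hyx)).weak
  intro p q hpq
  by_cases hpa : p = a
  · subst hpa; exact Day q (Ne.symm hpq)
  by_cases hqa : q = a
  · subst hqa; exact Dxa p hpa
  · exact Dxy p q hpa hqa hpq

lemma contraction (he : Function.Injective e) (hA : 3 ≤ Fintype.card A)
    (hF : ∀ π : V → A → A → Prop, Valid π → IsStrictTotalOrder A (F π))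
    (unanimity : ∀ π : V → A → A → Prop, Valid π → ∀ a b : A, (∀ v, π v a b) → F π a b)
    (iia : ∀ π π' : V → A → A → Prop, Valid π → Valid π' →
      ∀ a b : A, (∀ v, π v a b ↔ π' v a b) → (F π a b ↔ F π' a b))
    {U1 U2 : Finset V} (hdisj : ∀ v ∈ U2, v ∉ U1)
    (hU : Dec F (U1 ∪ U2)) : Dec F U1 ∨ Dec F U2 := by
  obtain ⟨a, b, c, hab, hac, hbc⟩ := exists_three hA
  set σ : V → A → A → Prop := fun v =>
    if v ∈ U1 then ordOf e (lv3 a b c)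
    else if v ∈ U2 then ordOf e (lv3 b c a) else ordOf e (lv3 c a b) with hσdef
  have hσ : Valid σ := by
    intro v; simp only [hσdef]; split_ifs <;> exact ordOf_sto he _
  have hFbc : F σ b c := by
    refine hU b c hbc σ hσ ?_
    intro v hv
    simp only [hσdef]
    rcases Finset.mem_union.mp hv with h1 | h2
    · rw [if_pos h1]
      exact ordOf_ltlv (by norm_num [lv3, hab, hac, hbc, Ne.symm hab, Ne.symm hac, Ne.symm hbc])
    · rw [if_neg (hdisj v h2), if_pos h2]
      exact ordOf_ltlv (by norm_num [lv3, hab, hac, hbc, Ne.symm hab, Ne.symm hac, Ne.symm hbc])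
  by_cases hFac : F σ a c
  · left
    refine weak_all he hA hF unanimity iia hac ?_
    intro π hπ h1 h2
    refine (iia π σ hπ hσ a c ?_).mpr hFac
    intro v
    simp only [hσdef]
    split_ifs with hv1 hv2
    · exact iff_of_true (h1 v hv1)
        (ordOf_ltlv (by norm_num [lv3, hab, hac, hbc, Ne.symm hab, Ne.symm hac, Ne.symm hbc]))
    · exact iff_of_false (sto_asymm (hπ v) (h2 v hv1))
        (not_ordOf_gtlv (by norm_num [lv3, hab, hac, hbc, Ne.symm hab, Ne.symm hac, Ne.symm hbc]))
    · exact iff_of_false (sto_asymm (hπ v) (h2 v hv1))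
        (not_ordOf_gtlv (by norm_num [lv3, hab, hac, hbc, Ne.symm hab, Ne.symm hac, Ne.symm hbc]))
  · right
    have hFca : F σ c a := sto_total (hF σ hσ) hac hFac
    have hFba : F σ b a := sto_trans (hF σ hσ) hFbc hFca
    refine weak_all he hA hF unanimity iia (fun h => hab h.symm) ?_
    intro π hπ h1 h2
    refine (iia π σ hπ hσ b a ?_).mpr hFba
    intro v
    simp only [hσdef]
    by_cases hv2 : v ∈ U2
    · rw [if_neg (hdisj v hv2), if_pos hv2]
      exact iff_of_true (h1 v hv2)
        (ordOf_ltlv (by norm_num [lv3, hab, hac, hbc, Ne.symm hab, Ne.symm hac, Ne.symm hbc]))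
    · have hπv : ¬ π v b a := sto_asymm (hπ v) (h2 v hv2)
      split_ifs with hv1
      · exact iff_of_false hπv
          (not_ordOf_gtlv (by norm_num [lv3, hab, hac, hbc, Ne.symm hab, Ne.symm hac, Ne.symm hbc]))
      · exact iff_of_false hπv
          (not_ordOf_gtlv (by norm_num [lv3, hab, hac, hbc, Ne.symm hab, Ne.symm hac, Ne.symm hbc]))

lemma exists_dec_singleton (he : Function.Injective e) (hA : 3 ≤ Fintype.card A)
    (hF : ∀ π : V → A → A → Prop, Valid π → IsStrictTotalOrder A (F π))
    (unanimity : ∀ π : V → A → A → Prop, Valid π → ∀ a b : A, (∀ v, π v a b) → F π a b)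
    (iia : ∀ π π' : V → A → A → Prop, Valid π → Valid π' →
      ∀ a b : A, (∀ v, π v a b ↔ π' v a b) → (F π a b ↔ F π' a b)) :
    ∀ n (U : Finset V), U.card = n → U.Nonempty → Dec F U → ∃ d ∈ U, Dec F {d} := by
  intro n
  induction n using Nat.strong_induction_on with
  | _ n ih =>
    intro U hcard hne hdec
    obtain ⟨v, hv⟩ := hne
    by_cases h1 : U.card = 1
    · obtain ⟨d, hd⟩ := Finset.card_eq_one.mp h1
      subst hd
      exact ⟨d, Finset.mem_singleton_self d, hdec⟩
    · have hcard2 : 2 ≤ U.card := by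
        have : 0 < U.card := Finset.card_pos.mpr ⟨v, hv⟩
        omega
      have hunion : {v} ∪ U.erase v = U := by
        rw [← Finset.insert_eq]; exact Finset.insert_erase hv
      have hdisj : ∀ w ∈ U.erase v, w ∉ ({v} : Finset V) := by
        intro w hw
        simp [Finset.mem_erase.mp hw |>.1]
      have hdec' : Dec F ({v} ∪ U.erase v) := by rw [hunion]; exact hdec
      rcases contraction he hA hF unanimity iia hdisj hdec' with h | h
      · exact ⟨v, hv, h⟩
      · have hlt : (U.erase v).card < n := by
          rw [← hcard]; exact Finset.card_erase_lt_of_mem hv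
        have hne' : (U.erase v).Nonempty := by
          rw [← Finset.card_pos, Finset.card_erase_of_mem hv]; omega
        obtain ⟨d, hd, hdd⟩ := ih _ hlt (U.erase v) rfl hne' h
        exact ⟨d, Finset.mem_of_mem_erase hd, hdd⟩

end Main
end ArrowAux

/-- Arrow's impossibility theorem: for a finite set `V` of at least 2 voters and a
finite set `A` of at least 3 alternatives, every social welfare function mapping each
profile of strict linear orders to a strict linear order that satisfies unanimity and
independence of irrelevant alternatives is dictatorial; i.e. there is no such function
that is non-dictatorial. -/
theorem arrow_impossibility
    (V A : Type) [Fintype V] [Fintype A]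
    (hV : 2 ≤ Fintype.card V) (hA : 3 ≤ Fintype.card A)
    (F : (V → A → A → Prop) → (A → A → Prop))
    (hF : ∀ π : V → A → A → Prop, (∀ v, IsStrictTotalOrder A (π v)) →
      IsStrictTotalOrder A (F π))
    (unanimity : ∀ π : V → A → A → Prop, (∀ v, IsStrictTotalOrder A (π v)) →
      ∀ a b : A, (∀ v, π v a b) → F π a b)
    (iia : ∀ π π' : V → A → A → Prop,
      (∀ v, IsStrictTotalOrder A (π v)) → (∀ v, IsStrictTotalOrder A (π' v)) →
      ∀ a b : A, (∀ v, π v a b ↔ π' v a b) → (F π a b ↔ F π' a b)) :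
    ∃ d : V, ∀ π : V → A → A → Prop, (∀ v, IsStrictTotalOrder A (π v)) →
      ∀ a b : A, π d a b → F π a b := by
  classical
  haveI : Nonempty V := Fintype.card_pos_iff.mp (by omega)
  have he : Function.Injective (fun a => ((Fintype.equivFin A) a : ℕ)) :=
    fun p q h => (Fintype.equivFin A).injective (Fin.val_injective h)
  obtain ⟨d, _, hdec⟩ := ArrowAux.exists_dec_singleton (F := F) he hA hF unanimity iia
    Finset.univ.card Finset.univ rfl Finset.univ_nonempty
    (fun a b _ π hπ hU => unanimity π hπ a b (fun v => hU v (Finset.mem_univ v)))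
  refine ⟨d, ?_⟩
  intro π hπ a b hab
  by_cases h : a = b
  · subst h; exact absurd hab (ArrowAux.sto_asymm (hπ d) hab)
  · exact hdec a b h π hπ
      (fun v hv => by rw [Finset.mem_singleton] at hv; subst hv; exact hab)
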